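/- arXiv:1604.00182 — 2 statements merged into one kernel-verified Lean document; each statement's English description precedes it below -/
import Mathlib

section
/- The α-dual of ℓ_p(F̂(r,s)) for 1 < p < ∞ is the set of sequences a such that sup over finite subsets K of ℕ of ∑_k | ∑_{n∈K} b_{nk} |^q is finite, where q = p/(p−1) and b_{nk} = (1/r)(−s/r)^{n−k} f_{n+1}²/(f_k f_{k+1}) a_n for 0 ≤ k ≤ n and 0 otherwise. Equivalently: (a_n x_n) ∈ ℓ_1 for all x ∈ ℓ_p(F̂(r,s)) iff this condition holds. -/
open scoped BigOperators
open Filter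
open scoped ENNReal

noncomputable def fibs (n : ℕ) : ℝ := (Nat.fib (n + 1) : ℝ)

noncomputable def Fhat (r s : ℝ) (x : ℕ → ℝ) : ℕ → ℝ
  | 0 => r * x 0
  | n + 1 => r * (fibs (n + 1) / fibs (n + 2)) * x (n + 1)
      + s * (fibs (n + 2) / fibs (n + 1)) * x n

noncomputable def cmat (r s : ℝ) (n k : ℕ) : ℝ :=
  (1 / r) * (-s / r) ^ (n - k) * (fibs (n + 1) ^ 2 / (fibs k * fibs (k + 1)))

lemma fibs_pos (n : ℕ) : 0 < fibs n := by
  unfold fibs; exact_mod_cast Nat.fib_pos.2 n.succ_pos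

lemma fibs_ne (n : ℕ) : fibs n ≠ 0 := (fibs_pos n).ne'

lemma cmat_succ (r s : ℝ) {n k : ℕ} (hk : k ≤ n) :
    cmat r s (n + 1) k = (-s / r) * (fibs (n + 2) ^ 2 / fibs (n + 1) ^ 2) * cmat r s n k := by
  unfold cmat
  rw [show n + 1 - k = (n - k) + 1 by omega, pow_succ]
  have h1 : fibs (n + 2) ^ 2 / fibs (n + 1) ^ 2 * (fibs (n + 1) ^ 2 / (fibs k * fibs (k + 1)))
      = fibs (n + 2) ^ 2 / (fibs k * fibs (k + 1)) :=
    div_mul_div_cancel₀ (pow_ne_zero 2 (fibs_ne (n + 1)))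
  calc (1 / r) * ((-s / r) ^ (n - k) * (-s / r)) * (fibs (n + 1 + 1) ^ 2 / (fibs k * fibs (k + 1)))
      = (-s / r) * ((1 / r) * (-s / r) ^ (n - k)) *
        (fibs (n + 2) ^ 2 / fibs (n + 1) ^ 2 * (fibs (n + 1) ^ 2 / (fibs k * fibs (k + 1)))) := by
        rw [h1]; ring_nf
    _ = _ := by ring

lemma inv_left {r : ℝ} (s : ℝ) (hr : r ≠ 0) (x : ℕ → ℝ) :
    ∀ n, x n = ∑ k ∈ Finset.range (n + 1), cmat r s n k * Fhat r s x k := by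
  intro n
  induction n with
  | zero =>
    simp [cmat, Fhat, fibs]
    field_simp
  | succ n ih =>
    rw [Finset.sum_range_succ]
    have h1 : ∑ k ∈ Finset.range (n + 1), cmat r s (n + 1) k * Fhat r s x k
        = (-s / r) * (fibs (n + 2) ^ 2 / fibs (n + 1) ^ 2) * x n := by
      rw [ih, Finset.mul_sum]
      refine Finset.sum_congr rfl fun k hk => ?_
      rw [cmat_succ r s (Nat.lt_succ_iff.1 (Finset.mem_range.1 hk))]
      ring
    rw [h1]
    show _ = _ + cmat r s (n+1) (n+1) * (r * (fibs (n + 1) / fibs (n + 2)) * x (n + 1)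
      + s * (fibs (n + 2) / fibs (n + 1)) * x n)
    unfold cmat
    rw [Nat.sub_self, pow_zero]
    have hA := fibs_ne (n + 1)
    have hB := fibs_ne (n + 2)
    field_simp
    ring

lemma inv_right {r : ℝ} (s : ℝ) (hr : r ≠ 0) (y : ℕ → ℝ) :
    ∀ n, Fhat r s (fun m => ∑ k ∈ Finset.range (m + 1), cmat r s m k * y k) n = y n := by
  intro n
  match n with
  | 0 =>
    show r * ∑ k ∈ Finset.range 1, cmat r s 0 k * y k = y 0
    simp [cmat, fibs]
    field_simp
  | n + 1 =>
    show r * (fibs (n + 1) / fibs (n + 2)) * (∑ k ∈ Finset.range (n + 2), cmat r s (n+1) k * y k)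
      + s * (fibs (n + 2) / fibs (n + 1)) * (∑ k ∈ Finset.range (n + 1), cmat r s n k * y k)
      = y (n+1)
    rw [Finset.sum_range_succ]
    have h1 : ∑ k ∈ Finset.range (n + 1), cmat r s (n + 1) k * y k
        = (-s / r) * (fibs (n + 2) ^ 2 / fibs (n + 1) ^ 2) *
          ∑ k ∈ Finset.range (n + 1), cmat r s n k * y k := by
      rw [Finset.mul_sum]
      refine Finset.sum_congr rfl fun k hk => ?_
      rw [cmat_succ r s (Nat.lt_succ_iff.1 (Finset.mem_range.1 hk))]
      ring
    rw [h1]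
    generalize (∑ k ∈ Finset.range (n + 1), cmat r s n k * y k) = t
    unfold cmat
    rw [Nat.sub_self, pow_zero]
    have hA := fibs_ne (n + 1)
    have hB := fibs_ne (n + 2)
    field_simp
    ring

lemma swap_sum (r s : ℝ) (a y : ℕ → ℝ) (K : Finset ℕ) :
    ∑ k ∈ Finset.range (K.sup id + 1),
        (∑ n ∈ K, (if k ≤ n then cmat r s n k * a n else 0)) * y k
      = ∑ n ∈ K, a n * ∑ k ∈ Finset.range (n + 1), cmat r s n k * y k := by
  simp_rw [Finset.sum_mul]
  rw [Finset.sum_comm]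
  refine Finset.sum_congr rfl fun n hn => ?_
  have hsub : Finset.range (n + 1) ⊆ Finset.range (K.sup id + 1) := by
    intro k hk; simp only [Finset.mem_range] at *
    have : n ≤ K.sup id := Finset.le_sup (f := id) hn
    omega
  rw [← Finset.sum_subset hsub (fun k _ hk => by
    rw [if_neg (by simp only [Finset.mem_range] at hk; omega), zero_mul])]
  rw [Finset.mul_sum]
  refine Finset.sum_congr rfl fun k hk => ?_
  rw [if_pos (Nat.lt_succ_iff.1 (Finset.mem_range.1 hk))]
  ring

noncomputable def evalCLM (P : ℝ≥0∞) [Fact (1 ≤ P)] (k : ℕ) :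
    lp (fun _ : ℕ => ℝ) P →L[ℝ] ℝ :=
  LinearMap.mkContinuous
    { toFun := fun f => f k
      map_add' := fun f g => by simp [lp.coeFn_add]
      map_smul' := fun c f => by simp [lp.coeFn_smul] }
    1 (fun f => by
      rw [one_mul]; exact lp.norm_apply_le_norm
        (by have := (Fact.out : (1:ℝ≥0∞) ≤ P); intro h; rw [h] at this; simp at this) f k)

@[simp] lemma evalCLM_apply (P : ℝ≥0∞) [Fact (1 ≤ P)] (k : ℕ) (f : lp (fun _ : ℕ => ℝ) P) :
    evalCLM P k f = f k := rfl

theorem alpha_dual (r s : ℝ) (hr : r ≠ 0) (hs : s ≠ 0) (p q : ℝ) (hp : 1 < p)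
    (hq : q = p / (p - 1)) (a : ℕ → ℝ) :
    (∀ x : ℕ → ℝ, Summable (fun k => |Fhat r s x k| ^ p) → Summable (fun n => |a n * x n|)) ↔
    ∃ C : ℝ, ∀ K J : Finset ℕ,
      ∑ k ∈ J, |∑ n ∈ K, (if k ≤ n then
        (1 / r) * (-s / r) ^ (n - k) * (fibs (n + 1) ^ 2 / (fibs k * fibs (k + 1))) * a n
        else 0)| ^ q ≤ C := by
  have hpq : p.HolderConjugate q := by
    rw [hq]; exact Real.HolderConjugate.conjExponent hp
  have hp0 : 0 < p := hpq.pos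
  have hq0 : 0 < q := hpq.symm.pos
  set P : ℝ≥0∞ := ENNReal.ofReal p with hP
  have hPto : P.toReal = p := ENNReal.toReal_ofReal hp0.le
  haveI : Fact (1 ≤ P) := ⟨ENNReal.one_le_ofReal.2 hp.le⟩
  have hPpos : 0 < P.toReal := by rw [hPto]; exact hp0
  suffices hmain :
      (∀ x : ℕ → ℝ, Summable (fun k => |Fhat r s x k| ^ p) → Summable (fun n => |a n * x n|)) ↔
      ∃ C : ℝ, ∀ K J : Finset ℕ,
        ∑ k ∈ J, |∑ n ∈ K, (if k ≤ n then cmat r s n k * a n else 0)| ^ q ≤ C by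
    exact hmain
  constructor
  · -- forward direction: Banach–Steinhaus
    intro h
    classical
    set d : Finset ℕ → ℕ → ℝ :=
      fun K k => ∑ n ∈ K, (if k ≤ n then cmat r s n k * a n else 0) with hd
    set φ : Finset ℕ → (lp (fun _ : ℕ => ℝ) P →L[ℝ] ℝ) :=
      fun K => ∑ k ∈ Finset.range (K.sup id + 1), d K k • evalCLM P k with hφ
    have hφ_apply : ∀ K (y : lp (fun _ : ℕ => ℝ) P),
        φ K y = ∑ k ∈ Finset.range (K.sup id + 1), d K k * y k := by
      intro K y
      rw [hφ]
      simp [ContinuousLinearMap.sum_apply, ContinuousLinearMap.smul_apply, smul_eq_mul]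
    have key : ∀ (K : Finset ℕ) (y : lp (fun _ : ℕ => ℝ) P),
        φ K y = ∑ n ∈ K, a n * (∑ k ∈ Finset.range (n + 1), cmat r s n k * y k) := by
      intro K y
      rw [hφ_apply]
      exact swap_sum r s a (⇑y) K
    have hpt : ∀ y : lp (fun _ : ℕ => ℝ) P, ∃ Cy, ∀ K, ‖φ K y‖ ≤ Cy := by
      intro y
      set x : ℕ → ℝ := fun m => ∑ k ∈ Finset.range (m + 1), cmat r s m k * y k with hx
      have hFx : ∀ n, Fhat r s x n = y n := inv_right s hr (⇑y)
      have hsum : Summable fun n => |a n * x n| := by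
        apply h
        have hy : Summable fun k => ‖(y : ℕ → ℝ) k‖ ^ P.toReal :=
          (memℓp_gen_iff hPpos).1 (lp.memℓp y)
        rw [hPto] at hy
        simp only [Real.norm_eq_abs] at hy
        simpa only [hFx] using hy
      refine ⟨∑' n, |a n * x n|, fun K => ?_⟩
      rw [key K y, Real.norm_eq_abs]
      calc |∑ n ∈ K, a n * x n| ≤ ∑ n ∈ K, |a n * x n| := Finset.abs_sum_le_sum_abs _ _
        _ ≤ ∑' n, |a n * x n| := Summable.sum_le_tsum K (fun _ _ => abs_nonneg _) hsum
    obtain ⟨C', hC'⟩ := banach_steinhaus hpt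
    have hC'0 : 0 ≤ C' := le_trans (norm_nonneg (φ ∅)) (hC' ∅)
    refine ⟨C' ^ q, fun K J => ?_⟩
    set J0 := Finset.range (K.sup id + 1) with hJ0
    have hd0 : ∀ k, k ∉ J0 → d K k = 0 := by
      intro k hk
      refine Finset.sum_eq_zero fun n hn => ?_
      rw [if_neg]
      have h1 : n ≤ K.sup id := Finset.le_sup (f := id) hn
      simp only [hJ0, Finset.mem_range] at hk
      omega
    have hJred : ∑ k ∈ J, |d K k| ^ q = ∑ k ∈ J ∩ J0, |d K k| ^ q := by
      refine (Finset.sum_subset Finset.inter_subset_left fun k hk hk' => ?_).symm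
      rw [hd0 k (fun hmem => hk' (Finset.mem_inter.2 ⟨hk, hmem⟩)), abs_zero,
        Real.zero_rpow hq0.ne']
    show ∑ k ∈ J, |d K k| ^ q ≤ C' ^ q
    rw [hJred]
    set J' := J ∩ J0 with hJ'
    set S := ∑ k ∈ J', |d K k| ^ q with hS
    have hS0 : 0 ≤ S := Finset.sum_nonneg fun k _ => Real.rpow_nonneg (abs_nonneg _) q
    rcases eq_or_lt_of_le hS0 with hS0' | hSpos
    · rw [← hS0']; exact Real.rpow_nonneg hC'0 q
    set g : ℕ → ℝ :=
      fun k => if k ∈ J' then |d K k| ^ (q - 1) * (if 0 ≤ d K k then 1 else -1) else 0 with hg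
    have hg0 : ∀ k, k ∉ J' → g k = 0 := by
      intro k hk; rw [hg]; simp only [if_neg hk]
    have hgmem : Memℓp g P := memℓp_gen (by
      apply summable_of_ne_finset_zero (s := J')
      intro k hk
      rw [hg0 k hk, norm_zero, Real.zero_rpow (by rw [hPto]; exact hp0.ne')])
    set G : lp (fun _ : ℕ => ℝ) P := ⟨g, hgmem⟩ with hG
    have hGk : ∀ k, (G : ℕ → ℝ) k = g k := fun k => rfl
    have hgabs : ∀ k ∈ J', |g k| = |d K k| ^ (q - 1) := by
      intro k hk
      rw [hg]; simp only [if_pos hk, abs_mul]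
      rcases le_or_gt 0 (d K k) with h1 | h1
      · rw [if_pos h1]
        simp [abs_of_nonneg (Real.rpow_nonneg (abs_nonneg _) _)]
      · rw [if_neg (not_le.2 h1)]
        simp [abs_of_nonneg (Real.rpow_nonneg (abs_nonneg _) _)]
    have hqp : (q - 1) * p = q := by
      have h1 : p * q = p + q := hpq.mul_eq_add
      nlinarith [h1]
    have hGnorm : ‖G‖ = S ^ (1 / p) := by
      rw [lp.norm_eq_tsum_rpow hPpos G, hPto]
      congr 1
      rw [tsum_eq_sum (s := J') (fun k hk => by
        show ‖(G : ℕ → ℝ) k‖ ^ p = 0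
        rw [hGk, hg0 k hk, norm_zero, Real.zero_rpow hp0.ne'])]
      refine Finset.sum_congr rfl fun k hk => ?_
      show ‖(G : ℕ → ℝ) k‖ ^ p = |d K k| ^ q
      rw [hGk, Real.norm_eq_abs, hgabs k hk, ← Real.rpow_mul (abs_nonneg _), hqp]
    have hφG : φ K G = S := by
      rw [hφ_apply]
      rw [← Finset.sum_subset (show J' ⊆ Finset.range (K.sup id + 1) from by
          rw [hJ']; exact Finset.inter_subset_right)
        (fun k _ hk' => by rw [hGk, hg0 k hk', mul_zero])]
      refine Finset.sum_congr rfl fun k hk => ?_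
      rw [hGk, hg]
      simp only [if_pos hk]
      rcases eq_or_ne (d K k) 0 with h1 | h1
      · rw [h1]; simp [Real.zero_rpow hq0.ne']
      · have habs : |d K k| ≠ 0 := abs_ne_zero.2 h1
        have hde : d K k * (if 0 ≤ d K k then (1:ℝ) else -1) = |d K k| := by
          rcases le_or_gt 0 (d K k) with h2 | h2
          · rw [if_pos h2, mul_one, abs_of_nonneg h2]
          · rw [if_neg (not_le.2 h2), mul_neg_one, abs_of_neg h2]
        calc d K k * (|d K k| ^ (q - 1) * (if 0 ≤ d K k then (1:ℝ) else -1))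
            = |d K k| ^ (q - 1) * (d K k * (if 0 ≤ d K k then (1:ℝ) else -1)) := by ring
          _ = |d K k| ^ (q - 1) * |d K k| := by rw [hde]
          _ = |d K k| ^ q := by rw [← Real.rpow_add_one habs, sub_add_cancel]
    have h1 : S ≤ C' * S ^ (1 / p) := by
      calc S = φ K G := hφG.symm
        _ ≤ |φ K G| := le_abs_self _
        _ = ‖φ K G‖ := (Real.norm_eq_abs _).symm
        _ ≤ ‖φ K‖ * ‖G‖ := (φ K).le_opNorm G
        _ ≤ C' * ‖G‖ := mul_le_mul_of_nonneg_right (hC' K) (norm_nonneg G)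
        _ = C' * S ^ (1 / p) := by rw [hGnorm]
    have hSp : 0 < S ^ (1 / p) := Real.rpow_pos_of_pos hSpos _
    have hsplit : S = S ^ (1 / q) * S ^ (1 / p) := by
      rw [← Real.rpow_add hSpos,
        show 1 / q + 1 / p = 1 by
          rw [one_div, one_div]
          have := hpq.inv_add_inv_eq_one
          linarith,
        Real.rpow_one]
    have h2 : S ^ (1 / q) ≤ C' := by
      have h1' : S ^ (1 / q) * S ^ (1 / p) ≤ C' * S ^ (1 / p) := hsplit.symm.trans_le h1
      exact le_of_mul_le_mul_right h1' hSp
    calc S = (S ^ (1 / q)) ^ q := by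
          rw [← Real.rpow_mul hS0, one_div_mul_cancel hq0.ne', Real.rpow_one]
      _ ≤ C' ^ q := Real.rpow_le_rpow (Real.rpow_nonneg hS0 _) h2 hq0.le
  · -- backward direction: Hölder
    rintro ⟨C, hC⟩ x hx
    have hC0 : 0 ≤ C := by simpa using hC ∅ ∅
    set y : ℕ → ℝ := Fhat r s x with hy
    set M : ℝ := (∑' k, |y k| ^ p) ^ (1 / p) with hM
    have hM0 : 0 ≤ M := Real.rpow_nonneg (tsum_nonneg fun k => Real.rpow_nonneg (abs_nonneg _) _) _
    have hinv : ∀ n, x n = ∑ k ∈ Finset.range (n + 1), cmat r s n k * y k :=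
      inv_left s hr x
    have hyn : ∀ J : Finset ℕ, ∑ k ∈ J, |y k| ^ p ≤ ∑' k, |y k| ^ p :=
      fun J => Summable.sum_le_tsum J (fun k _ => Real.rpow_nonneg (abs_nonneg _) p) hx
    have hbound : ∀ K' : Finset ℕ, |∑ n ∈ K', a n * x n| ≤ C ^ (1 / q) * M := by
      intro K'
      set J0 := Finset.range (K'.sup id + 1) with hJ0
      set dd : ℕ → ℝ := fun k => ∑ n ∈ K', (if k ≤ n then cmat r s n k * a n else 0) with hdd
      have hxn : ∑ n ∈ K', a n * x n = ∑ k ∈ J0, dd k * y k := by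
        rw [hJ0, hdd, swap_sum r s a y K']
        exact Finset.sum_congr rfl fun n _ => by rw [← hinv n]
      have hH : ∀ e : ℝ, e = 1 ∨ e = -1 → ∑ k ∈ J0, e * dd k * y k ≤ C ^ (1 / q) * M := by
        intro e he
        have habs : ∀ k, |e * dd k| = |dd k| := by
          intro k; rcases he with h | h <;> rw [h] <;> simp
        have hhold := Real.inner_le_Lp_mul_Lq (s := J0) (f := fun k => e * dd k) (g := y)
          hpq.symm
        refine le_trans hhold (mul_le_mul ?_ ?_ ?_ ?_)
        · apply Real.rpow_le_rpow
            (Finset.sum_nonneg fun k _ => Real.rpow_nonneg (abs_nonneg _) _) ?_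
            (by positivity)
          calc ∑ k ∈ J0, |e * dd k| ^ q = ∑ k ∈ J0, |dd k| ^ q := by simp_rw [habs]
            _ ≤ C := hC K' J0
        · exact Real.rpow_le_rpow
            (Finset.sum_nonneg fun k _ => Real.rpow_nonneg (abs_nonneg _) _) (hyn J0)
            (by positivity)
        · positivity
        · positivity
      rw [hxn]
      have h1 := hH 1 (Or.inl rfl)
      simp only [one_mul] at h1
      have h2 := hH (-1) (Or.inr rfl)
      have h2' : -(∑ k ∈ J0, dd k * y k) ≤ C ^ (1 / q) * M := by
        rw [← Finset.sum_neg_distrib]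
        refine le_trans (le_of_eq ?_) h2
        exact Finset.sum_congr rfl fun k _ => by ring
      exact abs_le.2 ⟨by linarith, h1⟩
    apply summable_of_sum_le (fun n => abs_nonneg _)
      (c := 2 * (C ^ (1 / q) * M))
    intro K
    classical
    rw [← Finset.sum_filter_add_sum_filter_not K (fun n => 0 ≤ a n * x n)
      (fun n => |a n * x n|)]
    have hp1 : ∑ n ∈ K.filter (fun n => 0 ≤ a n * x n), |a n * x n| ≤ C ^ (1 / q) * M := by
      calc ∑ n ∈ K.filter (fun n => 0 ≤ a n * x n), |a n * x n|
          = ∑ n ∈ K.filter (fun n => 0 ≤ a n * x n), a n * x n :=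
            Finset.sum_congr rfl fun n hn => abs_of_nonneg (Finset.mem_filter.1 hn).2
        _ ≤ |∑ n ∈ K.filter (fun n => 0 ≤ a n * x n), a n * x n| := le_abs_self _
        _ ≤ C ^ (1 / q) * M := hbound _
    have hp2 : ∑ n ∈ K.filter (fun n => ¬ 0 ≤ a n * x n), |a n * x n| ≤ C ^ (1 / q) * M := by
      calc ∑ n ∈ K.filter (fun n => ¬ 0 ≤ a n * x n), |a n * x n|
          = -∑ n ∈ K.filter (fun n => ¬ 0 ≤ a n * x n), a n * x n := by
            rw [← Finset.sum_neg_distrib]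
            exact Finset.sum_congr rfl fun n hn =>
              abs_of_neg (not_le.1 (Finset.mem_filter.1 hn).2)
        _ ≤ |∑ n ∈ K.filter (fun n => ¬ 0 ≤ a n * x n), a n * x n| := neg_le_abs _
        _ ≤ C ^ (1 / q) * M := hbound _
    linarith
end

section
/- The space ℓ_p(F̂(r,s)) for 1 < p < ∞ has Banach–Saks type p: every weakly null sequence (x_n) in ℓ_p(F̂(r,s)) has a subsequence (x_{k_l}) such that ‖∑_{l=0}^{n} x_{k_l}‖_{ℓ_p(F̂(r,s))} ≤ C (n+1)^{1/p} for some constant C > 0 and all n. -/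
open scoped BigOperators
open Filter
open scoped ENNReal

lemma Fhat_sum (r s : ℝ) (x : ℕ → ℕ → ℝ) (t : Finset ℕ) (k : ℕ) :
    Fhat r s (fun i => ∑ l ∈ t, x l i) k = ∑ l ∈ t, Fhat r s (x l) k := by
  cases k with
  | zero => simp [Fhat, Finset.mul_sum]
  | succ n => simp [Fhat, Finset.mul_sum, Finset.sum_add_distrib]

set_option maxHeartbeats 2000000 in
lemma unif_bound (p q : ℝ) (hpq : Real.HolderConjugate p q) (y : ℕ → ℕ → ℝ)
    (hmem : ∀ n, Summable fun k => |y n k| ^ p)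
    (hweak : ∀ g : ℕ → ℝ, Summable (fun k => |g k| ^ q) →
      Tendsto (fun n => ∑' k, g k * y n k) atTop (nhds 0)) :
    ∃ M : ℝ, 1 ≤ M ∧ ∀ n, (∑' k, |y n k| ^ p) ^ (1/p) ≤ M := by
  have hp : 1 < p := hpq.lt
  have hp0 : (0:ℝ) < p := hpq.pos
  have hpne : p ≠ 0 := hp0.ne'
  have hq0 : (0:ℝ) < q := hpq.symm.pos
  have hqne : q ≠ 0 := hq0.ne'
  set Q : ℝ≥0∞ := ENNReal.ofReal q with hQdef
  haveI : Fact (1 ≤ Q) := ⟨ENNReal.one_le_ofReal.2 hpq.symm.lt.le⟩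
  have hQt : Q.toReal = q := ENNReal.toReal_ofReal hq0.le
  have hQt0 : 0 < Q.toReal := by rw [hQt]; exact hq0
  have normQ : ∀ f : lp (fun _ : ℕ => ℝ) Q, ‖f‖ = (∑' k, |f k| ^ q) ^ (1/q) := fun f => by
    rw [lp.norm_eq_tsum_rpow hQt0, hQt]; simp only [Real.norm_eq_abs]
  have gsummable : ∀ f : lp (fun _ : ℕ => ℝ) Q, Summable fun k => |f k| ^ q := by
    intro f
    have := (lp.memℓp f).summable hQt0
    rw [hQt] at this; simpa only [Real.norm_eq_abs] using this
  -- pairing bound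
  have pair_summable : ∀ (n : ℕ) (g : ℕ → ℝ), Summable (fun k => |g k| ^ q) →
      Summable (fun k => g k * y n k) := by
    intro n g hg
    have h1 : Summable fun k => |y n k| * |g k| :=
      Real.summable_mul_of_Lp_Lq_of_nonneg hpq (fun k => abs_nonneg _) (fun k => abs_nonneg _)
        (hmem n) hg
    apply Summable.of_abs
    refine h1.congr fun k => ?_
    rw [abs_mul, mul_comm]
  have pair_bound : ∀ (n : ℕ) (g : ℕ → ℝ), Summable (fun k => |g k| ^ q) →
      |∑' k, g k * y n k| ≤ (∑' k, |y n k| ^ p) ^ (1/p) * (∑' k, |g k| ^ q) ^ (1/q) := by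
    intro n g hg
    have h1 : Summable fun k => |y n k| * |g k| :=
      Real.summable_mul_of_Lp_Lq_of_nonneg hpq (fun k => abs_nonneg _) (fun k => abs_nonneg _)
        (hmem n) hg
    have h1' : Summable fun k => |g k * y n k| := by
      refine h1.congr fun k => ?_; rw [abs_mul, mul_comm]
    have h2 : |∑' k, g k * y n k| ≤ ∑' k, |g k * y n k| := by
      have h2' : ‖∑' k, g k * y n k‖ ≤ ∑' k, ‖g k * y n k‖ :=
        norm_tsum_le_tsum_norm (f := fun k => g k * y n k)
          (by simpa only [Real.norm_eq_abs] using h1')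
      simpa only [Real.norm_eq_abs] using h2'
    refine h2.trans ?_
    have h3 : (∑' k, |g k * y n k|) = ∑' k, |y n k| * |g k| := by
      congr 1; funext k; rw [abs_mul, mul_comm]
    rw [h3]
    exact Real.inner_le_Lp_mul_Lq_tsum_of_nonneg hpq (fun k => abs_nonneg _)
      (fun k => abs_nonneg _) (hmem n) hg
  -- continuous linear maps
  have Tdef : ∀ n : ℕ, ∃ T : lp (fun _ : ℕ => ℝ) Q →L[ℝ] ℝ,
      (∀ g : lp (fun _ : ℕ => ℝ) Q, T g = ∑' k, g k * y n k) ∧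
      ‖T‖ ≤ (∑' k, |y n k| ^ p) ^ (1/p) := by
    intro n
    have hnn : (0:ℝ) ≤ (∑' k, |y n k| ^ p) ^ (1/p) :=
      Real.rpow_nonneg (tsum_nonneg fun k => Real.rpow_nonneg (abs_nonneg _) _) _
    set L : lp (fun _ : ℕ => ℝ) Q →ₗ[ℝ] ℝ :=
      { toFun := fun g => ∑' k, g k * y n k
        map_add' := by
          intro g h
          have hg := pair_summable n g (gsummable g)
          have hh := pair_summable n h (gsummable h)
          show (∑' k, (↑(g + h) : ℕ → ℝ) k * y n k)
              = (∑' k, (g : ℕ → ℝ) k * y n k) + ∑' k, (h : ℕ → ℝ) k * y n k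
          rw [← Summable.tsum_add hg hh]
          refine tsum_congr fun k => ?_
          have hck : (↑(g + h) : ℕ → ℝ) k = g k + h k := by simp [lp.coeFn_add]
          rw [hck]; ring
        map_smul' := by
          intro c g
          have hc : ∀ k, (↑(c • g) : ℕ → ℝ) k = c * g k := by
            intro k; simp [lp.coeFn_smul]
          show (∑' k, (↑(c • g) : ℕ → ℝ) k * y n k) = RingHom.id ℝ c • ∑' k, (g : ℕ → ℝ) k * y n k
          simp only [hc, RingHom.id_apply, smul_eq_mul, mul_assoc]
          exact tsum_mul_left } with hLdef
    refine ⟨L.mkContinuous ((∑' k, |y n k| ^ p) ^ (1/p)) ?_, fun g => rfl, ?_⟩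
    · intro g
      have := pair_bound n g (gsummable g)
      rw [← normQ g] at this
      simp only [Real.norm_eq_abs] at this ⊢; exact this
    · exact L.mkContinuous_norm_le hnn _
  choose T hT hTnorm using Tdef
  -- pointwise boundedness
  have ptbdd : ∀ g : lp (fun _ : ℕ => ℝ) Q, ∃ C, ∀ n, ‖T n g‖ ≤ C := by
    intro g
    have htt : Tendsto (fun n => ∑' k, g k * y n k) atTop (nhds 0) := hweak g (gsummable g)
    have hb : BddAbove (Set.range fun n => ‖T n g‖) := by
      have h2 : Tendsto (fun n => ‖T n g‖) atTop (nhds 0) := by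
        have := htt.norm
        rw [norm_zero] at this
        refine this.congr fun n => ?_
        rw [hT]
      exact h2.bddAbove_range
    obtain ⟨C, hC⟩ := hb
    exact ⟨C, fun n => hC ⟨n, rfl⟩⟩
  obtain ⟨M0, hM0⟩ := banach_steinhaus ptbdd
  refine ⟨max M0 1, le_max_right _ _, fun n => ?_⟩
  -- duality lower bound
  set A : ℝ := (∑' k, |y n k| ^ p) ^ (1/p) with hAdef
  have hSnn : (0:ℝ) ≤ ∑' k, |y n k| ^ p := tsum_nonneg fun k => Real.rpow_nonneg (abs_nonneg _) _
  have hAnn : 0 ≤ A := Real.rpow_nonneg hSnn _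
  rcases eq_or_lt_of_le hAnn with hA0 | hApos
  · rw [← hA0]; exact le_trans zero_le_one (le_max_right _ _)
  -- construct the dual element
  set g : ℕ → ℝ := fun k => if y n k = 0 then 0 else |y n k| ^ p / y n k with hgdef
  have hgabs : ∀ k, |g k| = |y n k| ^ (p - 1) := by
    intro k
    by_cases hk : y n k = 0
    · simp [hgdef, hk, Real.zero_rpow (show p - 1 ≠ 0 by linarith)]
    · have hyk : 0 < |y n k| := abs_pos.2 hk
      simp only [hgdef, if_neg hk]
      rw [abs_div, abs_of_nonneg (Real.rpow_nonneg (abs_nonneg _) _),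
        Real.rpow_sub hyk, Real.rpow_one]
  have hgq : Summable fun k => |g k| ^ q := by
    refine (hmem n).congr fun k => ?_
    rw [hgabs k, ← Real.rpow_mul (abs_nonneg _), hpq.sub_one_mul_conj]
  have hgy : ∀ k, g k * y n k = |y n k| ^ p := by
    intro k
    by_cases hk : y n k = 0
    · simp [hgdef, hk, Real.zero_rpow hpne]
    · simp only [hgdef, if_neg hk]
      field_simp
  -- the lp element
  set G : lp (fun _ : ℕ => ℝ) Q := ⟨g, memℓp_gen (by
    rw [hQt]; simpa only [Real.norm_eq_abs] using hgq)⟩ with hGdef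
  have hGcoe : ∀ k, (G : ℕ → ℝ) k = g k := fun k => rfl
  have hTnG : T n G = A ^ p := by
    rw [hT n G]
    have h1 : (∑' k, (G : ℕ → ℝ) k * y n k) = ∑' k, |y n k| ^ p := by
      congr 1; funext k; rw [hGcoe, hgy]
    rw [h1, hAdef, ← Real.rpow_mul hSnn, one_div_mul_cancel hpne, Real.rpow_one]
  have hGnorm : ‖G‖ = A ^ (p - 1) := by
    rw [normQ G]
    have h1 : (∑' k, |(G : ℕ → ℝ) k| ^ q) = ∑' k, |y n k| ^ p := by
      congr 1; funext k; rw [hGcoe, hgabs, ← Real.rpow_mul (abs_nonneg _), hpq.sub_one_mul_conj]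
    rw [h1]
    have h2 : (∑' k, |y n k| ^ p) = A ^ p := by
      rw [hAdef, ← Real.rpow_mul hSnn, one_div_mul_cancel hpne, Real.rpow_one]
    rw [h2, ← Real.rpow_mul hAnn]
    congr 1
    rw [mul_one_div, hpq.div_conj_eq_sub_one]
  have key : A ^ p ≤ ‖T n‖ * A ^ (p - 1) := by
    rw [← hTnG, ← hGnorm]
    calc T n G ≤ |T n G| := le_abs_self _
    _ = ‖T n G‖ := (Real.norm_eq_abs _).symm
    _ ≤ ‖T n‖ * ‖G‖ := (T n).le_opNorm G
  have hApm1 : 0 < A ^ (p - 1) := Real.rpow_pos_of_pos hApos _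
  have hfin : A ≤ ‖T n‖ := by
    have h1 : A ^ p = A ^ (p - 1) * A := by
      rw [← Real.rpow_add_one hApos.ne' (p-1), sub_add_cancel]
    rw [h1, mul_comm (‖T n‖)] at key
    exact le_of_mul_le_mul_left (by linarith [key]) hApm1
  calc A ≤ ‖T n‖ := hfin
  _ ≤ M0 := hM0 n
  _ ≤ max M0 1 := le_max_left _ _

set_option maxHeartbeats 2000000 in
lemma gliding (p : ℝ) (hp : 1 < p) (y : ℕ → ℕ → ℝ)
    (hmem : ∀ n, Summable fun k => |y n k| ^ p)
    (M : ℝ) (hM1 : 1 ≤ M) (hMb : ∀ n, (∑' k, |y n k| ^ p) ^ (1/p) ≤ M)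
    (hcoord : ∀ k, Tendsto (fun n => y n k) atTop (nhds 0)) :
    ∃ C : ℝ, 0 < C ∧ ∃ φ : ℕ → ℕ, StrictMono φ ∧ ∀ n : ℕ,
      (∑' k, |∑ l ∈ Finset.range (n + 1), y (φ l) k| ^ p) ^ (1 / p)
        ≤ C * ((n : ℝ) + 1) ^ (1 / p) := by
  classical
  have hp0 : (0:ℝ) < p := lt_trans one_pos hp
  have hpne : p ≠ 0 := hp0.ne'
  set P : ℝ≥0∞ := ENNReal.ofReal p with hPdef
  haveI : Fact (1 ≤ P) := ⟨ENNReal.one_le_ofReal.2 hp.le⟩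
  have hPt : P.toReal = p := ENNReal.toReal_ofReal hp0.le
  have hPt0 : 0 < P.toReal := by rw [hPt]; exact hp0
  have normP : ∀ f : lp (fun _ : ℕ => ℝ) P, ‖f‖ = (∑' k, |f k| ^ p) ^ (1/p) := fun f => by
    rw [lp.norm_eq_tsum_rpow hPt0, hPt]; simp only [Real.norm_eq_abs]
  have rpow_inv : ∀ c : ℝ, 0 ≤ c → (c ^ p) ^ (1/p) = c := fun c hc => by
    rw [← Real.rpow_mul hc, mul_one_div_cancel hpne, Real.rpow_one]
  -- head sums go to 0
  have head : ∀ m : ℕ, Tendsto (fun n => ∑ k ∈ Finset.range m, |y n k| ^ p) atTop (nhds 0) := by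
    intro m
    have h0 : ∀ k, Tendsto (fun n => |y n k| ^ p) atTop (nhds 0) := by
      intro k
      have h1 : Tendsto (fun n => |y n k|) atTop (nhds 0) := by
        simpa using (hcoord k).abs
      have h2 := h1.rpow_const (Or.inr hp0.le)
      simpa [Real.zero_rpow hpne] using h2
    simpa using tendsto_finset_sum (Finset.range m) (fun k (_ : k ∈ Finset.range m) => h0 k)
  -- tails go to 0
  have tail : ∀ n : ℕ, Tendsto (fun m => ∑' k, |y n (k + m)| ^ p) atTop (nhds 0) :=
    fun n => tendsto_sum_nat_add (fun k => |y n k| ^ p)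
  -- the inductive step
  set δ : ℕ → ℝ := fun l => (1/2 : ℝ) ^ (l + 1) with hδdef
  have hδpos : ∀ l, 0 < δ l := fun l => by positivity
  have step : ∀ (l a b : ℕ), ∃ nm : ℕ × ℕ, a < nm.1 ∧ b < nm.2 ∧
      (∑ k ∈ Finset.range b, |y nm.1 k| ^ p ≤ (δ l) ^ p) ∧
      (∑' k, |y nm.1 (k + nm.2)| ^ p ≤ (δ l) ^ p) := by
    intro l a b
    have hδp : 0 < (δ l) ^ p := Real.rpow_pos_of_pos (hδpos l) _
    obtain ⟨n, hn1, hn2⟩ := (((head b).eventually_le_const hδp).and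
      (eventually_gt_atTop a)).exists
    obtain ⟨m, hm1, hm2⟩ := (((tail n).eventually_le_const hδp).and
      (eventually_gt_atTop b)).exists
    exact ⟨(n, m), hn2, hm2, hn1, hm1⟩
  choose F hF1 hF2 hF3 hF4 using step
  -- recursion
  set σ : ℕ → ℕ × ℕ := fun l => Nat.rec (F 0 0 0) (fun l ih => F (l+1) ih.1 ih.2) l with hσdef
  have hσ0 : σ 0 = F 0 0 0 := rfl
  have hσs : ∀ l, σ (l+1) = F (l+1) (σ l).1 (σ l).2 := fun l => rfl
  set φ : ℕ → ℕ := fun l => (σ l).1 with hφdef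
  set Mm : ℕ → ℕ := fun l => Nat.casesOn l 0 (fun j => (σ j).2) with hMmdef
  have hMm0 : Mm 0 = 0 := rfl
  have hMms : ∀ l, Mm (l+1) = (σ l).2 := fun l => rfl
  have hφmono : StrictMono φ := strictMono_nat_of_lt_succ (fun l => by
    show (σ l).1 < (σ (l+1)).1
    rw [hσs l]; exact hF1 (l+1) (σ l).1 (σ l).2)
  have hMmmono : StrictMono Mm := strictMono_nat_of_lt_succ (fun l => by
    cases l with
    | zero =>
      show (0:ℕ) < (σ 0).2
      rw [hσ0]; exact hF2 0 0 0
    | succ j =>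
      show (σ j).2 < (σ (j+1)).2
      rw [hσs j]; exact hF2 (j+1) (σ j).1 (σ j).2)
  have headC : ∀ l, ∑ k ∈ Finset.range (Mm l), |y (φ l) k| ^ p ≤ (δ l) ^ p := by
    intro l
    cases l with
    | zero =>
      rw [hMm0]
      simpa using (Real.rpow_pos_of_pos (hδpos 0) p).le
    | succ j =>
      show ∑ k ∈ Finset.range ((σ j).2), |y ((σ (j+1)).1) k| ^ p ≤ (δ (j+1)) ^ p
      rw [hσs j]
      exact hF3 (j+1) (σ j).1 (σ j).2
  have tailC : ∀ l, ∑' k, |y (φ l) (k + Mm (l+1))| ^ p ≤ (δ l) ^ p := by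
    intro l
    cases l with
    | zero =>
      show ∑' k, |y ((σ 0).1) (k + (σ 0).2)| ^ p ≤ (δ 0) ^ p
      rw [hσ0]; exact hF4 0 0 0
    | succ j =>
      show ∑' k, |y ((σ (j+1)).1) (k + (σ (j+1)).2)| ^ p ≤ (δ (j+1)) ^ p
      rw [hσs j]
      exact hF4 (j+1) (σ j).1 (σ j).2
  -- decomposition functions
  set bk : ℕ → ℕ → ℝ := fun l k => if Mm l ≤ k ∧ k < Mm (l+1) then y (φ l) k else 0 with hbkdef
  set hd : ℕ → ℕ → ℝ := fun l k => if k < Mm l then y (φ l) k else 0 with hhddef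
  set tt : ℕ → ℕ → ℝ := fun l k => if Mm (l+1) ≤ k then y (φ l) k else 0 with httdef
  have hdec : ∀ l k, y (φ l) k = hd l k + bk l k + tt l k := by
    intro l k
    have hMle : Mm l ≤ Mm (l+1) := (hMmmono (Nat.lt_succ_self l)).le
    simp only [hbkdef, hhddef, httdef]
    by_cases h1 : k < Mm l
    · rw [if_pos h1, if_neg (fun h => absurd h.1 (not_le.2 h1)),
        if_neg (not_le.2 (lt_of_lt_of_le h1 hMle))]
      ring
    · by_cases h2 : k < Mm (l+1)
      · rw [if_neg h1, if_pos ⟨not_lt.1 h1, h2⟩, if_neg (not_le.2 h2)]; ring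
      · rw [if_neg h1, if_neg (fun h => absurd h.2 h2), if_pos (not_lt.1 h2)]; ring
  have habs_le : ∀ (f : ℕ → ℝ) l, (∀ k, |f k| ≤ |y (φ l) k|) →
      Summable (fun k => |f k| ^ p) := fun f l hf =>
    Summable.of_nonneg_of_le (fun k => Real.rpow_nonneg (abs_nonneg _) _)
      (fun k => Real.rpow_le_rpow (abs_nonneg _) (hf k) hp0.le) (hmem (φ l))
  have hbk_le : ∀ l k, |bk l k| ≤ |y (φ l) k| := by
    intro l k; simp only [hbkdef]; split_ifs <;> simp [abs_nonneg]
  have hhd_le : ∀ l k, |hd l k| ≤ |y (φ l) k| := by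
    intro l k; simp only [hhddef]; split_ifs <;> simp [abs_nonneg]
  have htt_le : ∀ l k, |tt l k| ≤ |y (φ l) k| := by
    intro l k; simp only [httdef]; split_ifs <;> simp [abs_nonneg]
  have hbk_s : ∀ l, Summable (fun k => |bk l k| ^ p) := fun l => habs_le _ l (hbk_le l)
  have hhd_s : ∀ l, Summable (fun k => |hd l k| ^ p) := fun l => habs_le _ l (hhd_le l)
  have htt_s : ∀ l, Summable (fun k => |tt l k| ^ p) := fun l => habs_le _ l (htt_le l)
  -- lp elements
  obtain ⟨BK, hBKcoe⟩ : ∃ BK : ℕ → lp (fun _ : ℕ => ℝ) P, ∀ l k, (BK l : ℕ → ℝ) k = bk l k :=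
    ⟨fun l => ⟨bk l, memℓp_gen (by rw [hPt]; simpa only [Real.norm_eq_abs] using hbk_s l)⟩,
      fun l k => rfl⟩
  obtain ⟨HD, hHDcoe⟩ : ∃ HD : ℕ → lp (fun _ : ℕ => ℝ) P, ∀ l k, (HD l : ℕ → ℝ) k = hd l k :=
    ⟨fun l => ⟨hd l, memℓp_gen (by rw [hPt]; simpa only [Real.norm_eq_abs] using hhd_s l)⟩,
      fun l k => rfl⟩
  obtain ⟨TT, hTTcoe⟩ : ∃ TT : ℕ → lp (fun _ : ℕ => ℝ) P, ∀ l k, (TT l : ℕ → ℝ) k = tt l k :=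
    ⟨fun l => ⟨tt l, memℓp_gen (by rw [hPt]; simpa only [Real.norm_eq_abs] using htt_s l)⟩,
      fun l k => rfl⟩
  obtain ⟨Ylp, hYcoe⟩ : ∃ Ylp : ℕ → lp (fun _ : ℕ => ℝ) P, ∀ l k, (Ylp l : ℕ → ℝ) k = y (φ l) k :=
    ⟨fun l => ⟨y (φ l), memℓp_gen (by rw [hPt]; simpa only [Real.norm_eq_abs] using hmem (φ l))⟩,
      fun l k => rfl⟩
  have hsplit : ∀ l, Ylp l = HD l + BK l + TT l := by
    intro l
    apply lp.ext
    funext k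
    have h1 : (↑(HD l + BK l + TT l) : ℕ → ℝ) k = hd l k + bk l k + tt l k := by
      simp [lp.coeFn_add, hHDcoe, hBKcoe, hTTcoe]
    rw [h1, hYcoe, hdec]
  -- norm bounds for heads and tails
  have hHDnorm : ∀ l, ‖HD l‖ ≤ δ l := by
    intro l
    rw [normP]
    have h1 : (∑' k, |(HD l : ℕ → ℝ) k| ^ p) = ∑ k ∈ Finset.range (Mm l), |hd l k| ^ p := by
      rw [tsum_congr (fun k => by rw [hHDcoe])]
      refine tsum_eq_sum fun k hk => ?_
      have hk' : ¬ k < Mm l := by simpa using hk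
      simp only [hhddef, if_neg hk']
      simp [Real.zero_rpow hpne]
    have h2 : ∑ k ∈ Finset.range (Mm l), |hd l k| ^ p
        = ∑ k ∈ Finset.range (Mm l), |y (φ l) k| ^ p := by
      refine Finset.sum_congr rfl fun k hk => ?_
      have hk' : k < Mm l := Finset.mem_range.1 hk
      simp only [hhddef, if_pos hk']
    have h3 : (∑' k, |(HD l : ℕ → ℝ) k| ^ p) ≤ (δ l) ^ p := by
      rw [h1, h2]; exact headC l
    calc (∑' k, |(HD l : ℕ → ℝ) k| ^ p) ^ (1/p)
        ≤ ((δ l) ^ p) ^ (1/p) := Real.rpow_le_rpow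
          (tsum_nonneg fun k => Real.rpow_nonneg (abs_nonneg _) _) h3 (by positivity)
      _ = δ l := rpow_inv _ (hδpos l).le
  have hTTnorm : ∀ l, ‖TT l‖ ≤ δ l := by
    intro l
    rw [normP]
    have hs := htt_s l
    have h1 : (∑' k, |(TT l : ℕ → ℝ) k| ^ p) = ∑' k, |tt l k| ^ p :=
      tsum_congr (fun k => by rw [hTTcoe])
    have h2 := Summable.sum_add_tsum_nat_add (f := fun k => |tt l k| ^ p) (Mm (l+1)) hs
    have h3 : ∑ k ∈ Finset.range (Mm (l+1)), |tt l k| ^ p = 0 := by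
      refine Finset.sum_eq_zero fun k hk => ?_
      have hk' : ¬ Mm (l+1) ≤ k := by simpa using Finset.mem_range.1 hk
      simp only [httdef, if_neg hk']
      simp [Real.zero_rpow hpne]
    have h4 : (∑' k, |tt l (k + Mm (l+1))| ^ p) = ∑' k, |y (φ l) (k + Mm (l+1))| ^ p := by
      refine tsum_congr fun k => ?_
      simp only [httdef, if_pos (Nat.le_add_left _ _)]
    have h5 : (∑' k, |tt l k| ^ p) ≤ (δ l) ^ p := by
      rw [← h2, h3, zero_add, h4]; exact tailC l
    calc (∑' k, |(TT l : ℕ → ℝ) k| ^ p) ^ (1/p)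
        ≤ ((δ l) ^ p) ^ (1/p) := Real.rpow_le_rpow
          (tsum_nonneg fun k => Real.rpow_nonneg (abs_nonneg _) _) (by rw [h1]; exact h5)
          (by positivity)
      _ = δ l := rpow_inv _ (hδpos l).le
  -- block bound
  have hBKsum : ∀ l, (∑' k, |bk l k| ^ p) ≤ M ^ p := by
    intro l
    have h1 : (∑' k, |bk l k| ^ p) ≤ ∑' k, |y (φ l) k| ^ p :=
      Summable.tsum_le_tsum (fun k => Real.rpow_le_rpow (abs_nonneg _) (hbk_le l k) hp0.le)
        (hbk_s l) (hmem (φ l))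
    have hSnn : (0:ℝ) ≤ ∑' k, |y (φ l) k| ^ p :=
      tsum_nonneg fun k => Real.rpow_nonneg (abs_nonneg _) _
    have h2 : (∑' k, |y (φ l) k| ^ p) ≤ M ^ p := by
      have h3 := Real.rpow_le_rpow (Real.rpow_nonneg hSnn _) (hMb (φ l)) hp0.le
      rwa [← Real.rpow_mul hSnn, one_div_mul_cancel hpne, Real.rpow_one] at h3
    linarith
  -- disjointness
  have hdisj : ∀ (n k : ℕ), |∑ l ∈ Finset.range (n+1), bk l k| ^ p
      = ∑ l ∈ Finset.range (n+1), |bk l k| ^ p := by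
    intro n k
    by_cases hex : ∃ l₀ ∈ Finset.range (n+1), bk l₀ k ≠ 0
    · obtain ⟨l₀, hl₀m, hl₀⟩ := hex
      have hcond : ∀ l, bk l k ≠ 0 → Mm l ≤ k ∧ k < Mm (l+1) := by
        intro l hbl
        by_contra hc
        exact hbl (by simp only [hbkdef]; rw [if_neg hc])
      have hzero : ∀ l ∈ Finset.range (n+1), l ≠ l₀ → bk l k = 0 := by
        intro l _ hlne
        by_contra hbl
        have h1 := hcond l hbl
        have h2 := hcond l₀ hl₀
        rcases lt_or_gt_of_ne hlne with hlt | hgt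
        · have hm : Mm (l+1) ≤ Mm l₀ := hMmmono.monotone (Nat.succ_le_of_lt hlt)
          exact absurd h2.1 (not_le.2 (lt_of_lt_of_le h1.2 hm))
        · have hm : Mm (l₀+1) ≤ Mm l := hMmmono.monotone (Nat.succ_le_of_lt hgt)
          exact absurd h1.1 (not_le.2 (lt_of_lt_of_le h2.2 hm))
      rw [Finset.sum_eq_single_of_mem l₀ hl₀m hzero,
        Finset.sum_eq_single_of_mem l₀ hl₀m (fun l hl hne => by
          rw [hzero l hl hne]; simp [Real.zero_rpow hpne])]
    · push_neg at hex
      rw [Finset.sum_eq_zero hex, Finset.sum_eq_zero (fun l hl => by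
        rw [hex l hl]; simp [Real.zero_rpow hpne])]
      simp [Real.zero_rpow hpne]
  -- conclusion
  refine ⟨M + 2, by linarith, φ, hφmono, fun n => ?_⟩
  have hgeom : ∑ l ∈ Finset.range (n+1), δ l ≤ 1 := by
    have hform : ∀ m : ℕ, ∑ l ∈ Finset.range m, δ l = 1 - (1/2:ℝ)^m := by
      intro m
      induction m with
      | zero => simp
      | succ j ih =>
        rw [Finset.sum_range_succ, ih]
        simp only [hδdef]
        rw [pow_succ]
        ring
    rw [hform]
    have : (0:ℝ) ≤ (1/2:ℝ)^(n+1) := by positivity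
    linarith
  set S : lp (fun _ : ℕ => ℝ) P := ∑ l ∈ Finset.range (n+1), Ylp l with hSdef
  have hScoe : ∀ k, (S : ℕ → ℝ) k = ∑ l ∈ Finset.range (n+1), y (φ l) k := by
    intro k
    rw [hSdef, lp.coeFn_sum, Finset.sum_apply]
    exact Finset.sum_congr rfl fun l _ => hYcoe l k
  have hLHS : (∑' k, |∑ l ∈ Finset.range (n + 1), y (φ l) k| ^ p) ^ (1 / p) = ‖S‖ := by
    rw [normP]
    congr 1
    exact tsum_congr fun k => by rw [hScoe]
  rw [hLHS]
  -- split S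
  have hS : S = (∑ l ∈ Finset.range (n+1), BK l) + ∑ l ∈ Finset.range (n+1), (HD l + TT l) := by
    rw [hSdef, ← Finset.sum_add_distrib]
    refine Finset.sum_congr rfl fun l _ => ?_
    rw [hsplit l]; abel
  have hrest : ‖∑ l ∈ Finset.range (n+1), (HD l + TT l)‖ ≤ 2 := by
    calc ‖∑ l ∈ Finset.range (n+1), (HD l + TT l)‖
        ≤ ∑ l ∈ Finset.range (n+1), ‖HD l + TT l‖ := norm_sum_le _ _
      _ ≤ ∑ l ∈ Finset.range (n+1), (δ l + δ l) := Finset.sum_le_sum fun l _ =>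
          (norm_add_le _ _).trans (add_le_add (hHDnorm l) (hTTnorm l))
      _ = 2 * ∑ l ∈ Finset.range (n+1), δ l := by
          rw [Finset.mul_sum]; exact Finset.sum_congr rfl fun l _ => by ring
      _ ≤ 2 := by linarith
  have hblocks : ‖∑ l ∈ Finset.range (n+1), BK l‖ ≤ M * ((n:ℝ)+1) ^ (1/p) := by
    rw [normP]
    have h1 : (∑' k, |((∑ l ∈ Finset.range (n+1), BK l : lp (fun _ : ℕ => ℝ) P) : ℕ → ℝ) k| ^ p)
        = ∑ l ∈ Finset.range (n+1), ∑' k, |bk l k| ^ p := by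
      rw [tsum_congr (fun k => by
        rw [lp.coeFn_sum, Finset.sum_apply,
          Finset.sum_congr rfl fun l (_ : l ∈ Finset.range (n+1)) => hBKcoe l k,
          hdisj n k])]
      exact Summable.tsum_finsetSum (fun l _ => hbk_s l)
    rw [h1]
    have h2 : ∑ l ∈ Finset.range (n+1), ∑' k, |bk l k| ^ p ≤ ((n:ℝ)+1) * M ^ p := by
      calc ∑ l ∈ Finset.range (n+1), ∑' k, |bk l k| ^ p
          ≤ ∑ l ∈ Finset.range (n+1), M ^ p := Finset.sum_le_sum fun l _ => hBKsum l
        _ = ((n:ℝ)+1) * M ^ p := by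
            rw [Finset.sum_const, Finset.card_range, nsmul_eq_mul]; push_cast; ring
    have hsumnn : (0:ℝ) ≤ ∑ l ∈ Finset.range (n+1), ∑' k, |bk l k| ^ p :=
      Finset.sum_nonneg fun l _ => tsum_nonneg fun k => Real.rpow_nonneg (abs_nonneg _) _
    calc (∑ l ∈ Finset.range (n+1), ∑' k, |bk l k| ^ p) ^ (1/p)
        ≤ (((n:ℝ)+1) * M ^ p) ^ (1/p) := Real.rpow_le_rpow hsumnn h2 (by positivity)
      _ = ((n:ℝ)+1) ^ (1/p) * (M ^ p) ^ (1/p) := Real.mul_rpow (by positivity)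
          (Real.rpow_nonneg (by linarith) _)
      _ = M * ((n:ℝ)+1) ^ (1/p) := by rw [rpow_inv M (by linarith)]; ring
  have hone : (1:ℝ) ≤ ((n:ℝ)+1) ^ (1/p) := by
    have hn0 : (0:ℝ) ≤ (n:ℝ) := Nat.cast_nonneg n
    calc (1:ℝ) = (1:ℝ) ^ (1/p) := (Real.one_rpow _).symm
      _ ≤ ((n:ℝ)+1) ^ (1/p) := Real.rpow_le_rpow zero_le_one (by linarith) (by positivity)
  calc ‖S‖ ≤ ‖∑ l ∈ Finset.range (n+1), BK l‖ + ‖∑ l ∈ Finset.range (n+1), (HD l + TT l)‖ := by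
        rw [hS]; exact norm_add_le _ _
    _ ≤ M * ((n:ℝ)+1) ^ (1/p) + 2 := add_le_add hblocks hrest
    _ ≤ (M + 2) * ((n:ℝ)+1) ^ (1/p) := by nlinarith

set_option maxHeartbeats 1000000 in
theorem banach_saks_type_p (r s : ℝ) (hr : r ≠ 0) (hs : s ≠ 0) (p q : ℝ)
    (hp : 1 < p) (hq : q = p / (p - 1)) (x : ℕ → ℕ → ℝ)
    (hmem : ∀ n, Summable fun k => |Fhat r s (x n) k| ^ p)
    (hweak : ∀ g : ℕ → ℝ, Summable (fun k => |g k| ^ q) →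
      Tendsto (fun n => ∑' k, g k * Fhat r s (x n) k) atTop (nhds 0)) :
    ∃ C : ℝ, 0 < C ∧ ∃ φ : ℕ → ℕ, StrictMono φ ∧ ∀ n : ℕ,
      (∑' k, |Fhat r s (fun i => ∑ l ∈ Finset.range (n + 1), x (φ l) i) k| ^ p) ^ (1 / p)
        ≤ C * ((n : ℝ) + 1) ^ (1 / p) := by
  have hpq : p.HolderConjugate q := (Real.holderConjugate_iff_eq_conjExponent hp).2 hq
  have hp0 : (0:ℝ) < p := lt_trans one_pos hp
  have hpne : p ≠ 0 := hp0.ne'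
  have hqne : q ≠ 0 := hpq.symm.ne_zero
  have hmem' : ∀ n, Summable fun k => |(fun n k => Fhat r s (x n) k) n k| ^ p := hmem
  have hweak' : ∀ g : ℕ → ℝ, Summable (fun k => |g k| ^ q) →
      Tendsto (fun n => ∑' k, g k * (fun n k => Fhat r s (x n) k) n k) atTop (nhds 0) := hweak
  have hcoord : ∀ k, Tendsto (fun n => (fun n k => Fhat r s (x n) k) n k) atTop (nhds 0) := by
    intro k
    have hg : Summable (fun j => |(fun j => if j = k then (1:ℝ) else 0) j| ^ q) := by
      apply summable_of_ne_finset_zero (s := ({k} : Finset ℕ))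
      intro j hj
      simp only [Finset.mem_singleton] at hj
      simp [if_neg hj, Real.zero_rpow hqne]
    have h1 := hweak' _ hg
    refine h1.congr fun n => ?_
    refine (tsum_eq_single k fun j hj => by simp [if_neg hj]).trans ?_
    simp
  obtain ⟨M, hM1, hMb⟩ := unif_bound p q hpq (fun n k => Fhat r s (x n) k) hmem' hweak'
  obtain ⟨C, hC, φ, hφ, hbound⟩ :=
    gliding p hp (fun n k => Fhat r s (x n) k) hmem' M hM1 hMb hcoord
  refine ⟨C, hC, φ, hφ, fun n => ?_⟩
  calc (∑' k, |Fhat r s (fun i => ∑ l ∈ Finset.range (n + 1), x (φ l) i) k| ^ p) ^ (1 / p)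
      = (∑' k, |∑ l ∈ Finset.range (n + 1), Fhat r s (x (φ l)) k| ^ p) ^ (1 / p) := by
        congr 1
        exact tsum_congr fun k => by
          rw [Fhat_sum r s (fun l => x (φ l)) (Finset.range (n+1)) k]
    _ ≤ C * ((n : ℝ) + 1) ^ (1 / p) := hbound n
end
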